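/- For u,v ∈ (ℤ/dℤ)^n and x ∈ (ℤ/dℤ)^{2n}, writing σ_n = Σ_{y,z} α_{y,z} |Ψ_y⟩⟨Ψ_z|, one has T_x(|u⟩⟨v| ⊗ σ_n)T_x† = d^{−2n} |Ψ'_x⟩⟨Ψ'_x| ⊗ Σ_{y,z} α_{y,z} ω^{⟨x, y−z⟩} N_y |u⟩⟨v| N_z†, where T_x = |Ψ'_x⟩⟨Ψ'_x| ⊗ N_x. -/

import Mathlib

open Matrix Kronecker BigOperators Finset ComplexOrder

noncomputable def Xmat (d : ℕ) : Matrix (ZMod d) (ZMod d) ℂ :=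
  Matrix.of fun r c => if r = c - 1 then 1 else 0

noncomputable def Zmat (d : ℕ) (ω : ℂ) : Matrix (ZMod d) (ZMod d) ℂ :=
  Matrix.of fun r c => if r = c then ω ^ c.val else 0

/-- The Weyl operator `N_(i,j) = X^i Z^j`. -/
noncomputable def weyl (d : ℕ) [NeZero d] (ω : ℂ) (u : ZMod d × ZMod d) : Matrix (ZMod d) (ZMod d) ℂ :=
  Xmat d ^ u.1.val * Zmat d ω ^ u.2.val

/-- Tensor-product Weyl operator on `H^{⊗n}`. -/
noncomputable def weylT (d n : ℕ) [NeZero d] (ω : ℂ) (x : Fin n → ZMod d × ZMod d) :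
    Matrix (Fin n → ZMod d) (Fin n → ZMod d) ℂ :=
  Matrix.of fun m l => ∏ i, weyl d ω (x i) (m i) (l i)

/-- Symplectic form on `(ℤ/d)^{2n}`. -/
def symp {d n : ℕ} (y y' : Fin n → ZMod d × ZMod d) : ZMod d :=
  ∑ i, ((y i).1 * (y' i).2 - (y i).2 * (y' i).1)

/-- Generalized Bell vector `|Ψ_y⟩ = d^{-n/2} ∑_l |l⟩ ⊗ N_y |l⟩`. -/
noncomputable def bell (d n : ℕ) [NeZero d] (ω : ℂ) (y : Fin n → ZMod d × ZMod d) :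
    (Fin n → ZMod d) × (Fin n → ZMod d) → ℂ :=
  fun p => (Real.sqrt (d ^ n) : ℂ)⁻¹ * weylT d n ω y p.2 p.1

/-- `|Ψ'_x⟩ = d^{-n/2} ∑_l N_x |l⟩ ⊗ |l⟩`. -/
noncomputable def bell' (d n : ℕ) [NeZero d] (ω : ℂ) (x : Fin n → ZMod d × ZMod d) :
    (Fin n → ZMod d) × (Fin n → ZMod d) → ℂ :=
  fun p => (Real.sqrt (d ^ n) : ℂ)⁻¹ * weylT d n ω x p.1 p.2

/-- `⟨Ψ_x| σ |Ψ_x⟩`. -/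
noncomputable def braket (d n : ℕ) [NeZero d] (ω : ℂ)
    (σ : Matrix ((Fin n → ZMod d) × (Fin n → ZMod d)) ((Fin n → ZMod d) × (Fin n → ZMod d)) ℂ)
    (x : Fin n → ZMod d × ZMod d) : ℂ :=
  dotProduct (star (bell d n ω x)) (σ.mulVec (bell d n ω x))

/-- The teleportation channel `Λ_σ(ρ) = ∑_x ⟨Ψ_x|σ|Ψ_x⟩ N_x ρ N_x†`. -/
noncomputable def telechan (d n : ℕ) [NeZero d] (ω : ℂ)
    (σ : Matrix ((Fin n → ZMod d) × (Fin n → ZMod d)) ((Fin n → ZMod d) × (Fin n → ZMod d)) ℂ)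
    (ρ : Matrix (Fin n → ZMod d) (Fin n → ZMod d) ℂ) :
    Matrix (Fin n → ZMod d) (Fin n → ZMod d) ℂ :=
  ∑ x : Fin n → ZMod d × ZMod d, braket d n ω σ x • (weylT d n ω x * ρ * (weylT d n ω x)ᴴ)

/-- Kraus operator `T_x = |Ψ'_x⟩⟨Ψ'_x| ⊗ N_x` on `(T⊗A)⊗B`. -/
noncomputable def kraus (d n : ℕ) [NeZero d] (ω : ℂ) (x : Fin n → ZMod d × ZMod d) :
    Matrix (((Fin n → ZMod d) × (Fin n → ZMod d)) × (Fin n → ZMod d))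
           (((Fin n → ZMod d) × (Fin n → ZMod d)) × (Fin n → ZMod d)) ℂ :=
  Matrix.of fun p q => bell' d n ω x p.1 * star (bell' d n ω x q.1) * weylT d n ω x p.2 q.2

/-- `ρ ⊗ σ` on `(T⊗A)⊗B` (ρ on T, σ on A⊗B). -/
noncomputable def tensorTAB (d n : ℕ)
    (ρ : Matrix (Fin n → ZMod d) (Fin n → ZMod d) ℂ)
    (σ : Matrix ((Fin n → ZMod d) × (Fin n → ZMod d)) ((Fin n → ZMod d) × (Fin n → ZMod d)) ℂ) :
    Matrix (((Fin n → ZMod d) × (Fin n → ZMod d)) × (Fin n → ZMod d))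
           (((Fin n → ZMod d) × (Fin n → ZMod d)) × (Fin n → ZMod d)) ℂ :=
  Matrix.of fun p q => ρ p.1.1 q.1.1 * σ (p.1.2, p.2) (q.1.2, q.2)

/-- Partial trace over the first two subsystems (T and A). -/
noncomputable def ptraceTA (d n : ℕ) [NeZero d]
    (M : Matrix (((Fin n → ZMod d) × (Fin n → ZMod d)) × (Fin n → ZMod d))
               (((Fin n → ZMod d) × (Fin n → ZMod d)) × (Fin n → ZMod d)) ℂ) :
    Matrix (Fin n → ZMod d) (Fin n → ZMod d) ℂ :=
  Matrix.of fun b b' => ∑ t : Fin n → ZMod d, ∑ a : Fin n → ZMod d, M ((t, a), b) ((t, a), b')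


section AuxA
variable {d : ℕ} [NeZero d] {ω : ℂ}

lemma Xmat_apply (r c : ZMod d) : Xmat d r c = if r = c - 1 then 1 else 0 := rfl
lemma Zmat_apply (r c : ZMod d) : Zmat d ω r c = if r = c then ω ^ c.val else 0 := rfl

lemma Xpow_apply (k : ℕ) (r c : ZMod d) : (Xmat d ^ k) r c = if r = c - (k : ZMod d) then 1 else 0 := by
  induction k generalizing c with
  | zero => simp [Matrix.one_apply]
  | succ k ih =>
    rw [pow_succ, Matrix.mul_apply]
    simp only [Xmat_apply, mul_ite, mul_one, mul_zero, Finset.sum_ite_eq',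
      Finset.mem_univ, if_true, ih]
    have : c - 1 - (k : ZMod d) = c - ((k : ℕ) + 1 : ℕ) := by push_cast; ring
    rw [this]

lemma Zpow_apply (k : ℕ) (r c : ZMod d) : (Zmat d ω ^ k) r c = if r = c then ω ^ (k * c.val) else 0 := by
  induction k with
  | zero => simp [Matrix.one_apply]
  | succ k ih =>
    rw [pow_succ, Matrix.mul_apply]
    simp only [Zmat_apply, mul_ite, mul_zero, Finset.sum_ite_eq',
      Finset.mem_univ, if_true, ih, ite_mul, zero_mul]
    split
    · rw [← pow_add]; congr 1; ring
    · rfl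

lemma weyl_apply (ω : ℂ) (a : ZMod d × ZMod d) (r c : ZMod d) :
    weyl d ω a r c = if r = c - a.1 then ω ^ (c.val * a.2.val) else 0 := by
  rw [weyl, Matrix.mul_apply]
  have h : ∀ m : ZMod d, (Xmat d ^ a.1.val) r m * (Zmat d ω ^ a.2.val) m c
      = if m = c then (Xmat d ^ a.1.val) r m * ω ^ (a.2.val * c.val) else 0 := by
    intro m; rw [Zpow_apply]
    by_cases hm : m = c <;> simp [hm]
  rw [Finset.sum_congr rfl fun m _ => h m]
  simp only [Finset.sum_ite_eq', Finset.mem_univ, if_true, Xpow_apply]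
  rw [ZMod.natCast_val, ZMod.cast_id, Nat.mul_comm]
  split <;> simp

lemma chi_add (h : ω ^ d = 1) (a b : ZMod d) : ω ^ (a + b).val = ω ^ a.val * ω ^ b.val := by
  rw [ZMod.val_add, ← pow_add]; exact (pow_eq_pow_mod _ h).symm

lemma chi_valmul (h : ω ^ d = 1) (a b : ZMod d) : ω ^ (a.val * b.val) = ω ^ (a * b).val := by
  rw [ZMod.val_mul]; exact (pow_eq_pow_mod _ h)

lemma chi_neg (h : ω ^ d = 1) (a : ZMod d) : ω ^ (-a).val = (ω ^ a.val)⁻¹ := by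
  refine eq_inv_of_mul_eq_one_left ?_
  rw [← chi_add h, neg_add_cancel, ZMod.val_zero, pow_zero]

lemma chi_star (h : ω ^ d = 1) (hs : star ω = ω⁻¹) (a : ZMod d) :
    star (ω ^ a.val) = ω ^ (-a).val := by
  rw [star_pow, hs, inv_pow, chi_neg h]

lemma weyl_mul_apply (h : ω ^ d = 1) (x y : ZMod d × ZMod d) (r b : ZMod d) :
    (weyl d ω x * weyl d ω y) r b
      = if r = b - y.1 - x.1 then ω ^ ((b - y.1).val * x.2.val) * ω ^ (b.val * y.2.val) else 0 := by
  rw [Matrix.mul_apply, Finset.sum_eq_single (b - y.1)]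
  · simp [weyl_apply, ite_mul, zero_mul]
  · intro a _ ha; simp [weyl_apply, ha]
  · simp

lemma weyl_comm (h : ω ^ d = 1) (hs : star ω = ω⁻¹) (x y : ZMod d × ZMod d) :
    weyl d ω x * weyl d ω y * (weyl d ω x)ᴴ
      = ω ^ (x.1 * y.2 - x.2 * y.1).val • weyl d ω y := by
  ext r u
  rw [Matrix.mul_apply, Finset.sum_eq_single (u + x.1)]
  · rw [weyl_mul_apply h, Matrix.conjTranspose_apply, weyl_apply, Matrix.smul_apply,
      weyl_apply, smul_eq_mul]
    have h1 : u + x.1 - x.1 = u := by ring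
    have h2 : u + x.1 - y.1 - x.1 = u - y.1 := by ring
    rw [h2, if_pos h1.symm]
    by_cases hr : r = u - y.1
    · rw [if_pos hr, if_pos hr]
      simp only [chi_valmul h, chi_star h hs, ← chi_add h]
      have e : (u + x.1 - y.1) * x.2 + (u + x.1) * y.2 + -((u + x.1) * x.2)
          = x.1 * y.2 - x.2 * y.1 + u * y.2 := by ring
      rw [e]
    · rw [if_neg hr, if_neg hr, zero_mul, mul_zero]
  · intro b _ hb
    have : ¬ (u = b - x.1) := fun hc => hb (by rw [hc]; ring)
    rw [Matrix.conjTranspose_apply, weyl_apply, if_neg this, star_zero, mul_zero]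
  · simp

end AuxA

section AuxC
variable {d n : ℕ} [NeZero d] {ω : ℂ}

noncomputable def tens (d n : ℕ) (f : Fin n → Matrix (ZMod d) (ZMod d) ℂ) :
    Matrix (Fin n → ZMod d) (Fin n → ZMod d) ℂ :=
  Matrix.of fun a b => ∏ i, f i (a i) (b i)

lemma tens_mul (f g : Fin n → Matrix (ZMod d) (ZMod d) ℂ) :
    tens d n f * tens d n g = tens d n (fun i => f i * g i) := by
  ext a b
  simp only [tens, Matrix.mul_apply, Matrix.of_apply, ← Finset.prod_mul_distrib]
  rw [Finset.prod_univ_sum, Fintype.piFinset_univ]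

lemma tens_conj (f : Fin n → Matrix (ZMod d) (ZMod d) ℂ) :
    (tens d n f)ᴴ = tens d n (fun i => (f i)ᴴ) := by
  ext a b
  simp [tens, Matrix.conjTranspose_apply]

lemma tens_smul (c : Fin n → ℂ) (f : Fin n → Matrix (ZMod d) (ZMod d) ℂ) :
    tens d n (fun i => c i • f i) = (∏ i, c i) • tens d n f := by
  ext a b
  simp [tens, Finset.prod_mul_distrib]

lemma weylT_eq_tens (x : Fin n → ZMod d × ZMod d) :
    weylT d n ω x = tens d n (fun i => weyl d ω (x i)) := rfl

lemma chi_sum (h : ω ^ d = 1) (s : Fin n → ZMod d) :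
    ω ^ (∑ i, s i).val = ∏ i, ω ^ (s i).val := by
  classical
  induction (Finset.univ : Finset (Fin n)) using Finset.cons_induction with
  | empty => simp
  | cons a t ha ih => rw [Finset.sum_cons, Finset.prod_cons, chi_add h, ih]

lemma weylT_comm (h : ω ^ d = 1) (hs : star ω = ω⁻¹) (x y : Fin n → ZMod d × ZMod d) :
    weylT d n ω x * weylT d n ω y * (weylT d n ω x)ᴴ
      = ω ^ (symp x y).val • weylT d n ω y := by
  rw [weylT_eq_tens, weylT_eq_tens, tens_conj, tens_mul, tens_mul]
  have e : (fun i => weyl d ω (x i) * weyl d ω (y i) * (weyl d ω (x i))ᴴ)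
      = fun i => ω ^ (((x i).1 * (y i).2 - (x i).2 * (y i).1)).val • weyl d ω (y i) :=
    funext fun i => weyl_comm h hs _ _
  rw [e, tens_smul, symp, chi_sum h]

end AuxC

section AuxD
variable {d n : ℕ} [NeZero d] {ω : ℂ}

lemma cc : ((Real.sqrt (d ^ n) : ℂ))⁻¹ * ((Real.sqrt (d ^ n) : ℂ))⁻¹ = ((d : ℂ) ^ n)⁻¹ := by
  rw [← mul_inv, ← Complex.ofReal_mul, Real.mul_self_sqrt (by positivity)]
  congr 1
  push_cast
  ring

lemma star_sqrtc : star ((Real.sqrt (d ^ n) : ℂ))⁻¹ = ((Real.sqrt (d ^ n) : ℂ))⁻¹ := by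
  rw [star_inv₀, Complex.star_def, Complex.conj_ofReal]

lemma symp_sub (x y z : Fin n → ZMod d × ZMod d) :
    symp x (y - z) = symp x y - symp x z := by
  unfold symp
  rw [← Finset.sum_sub_distrib]
  refine Finset.sum_congr rfl fun i _ => ?_
  show (x i).1 * ((y i).2 - (z i).2) - (x i).2 * ((y i).1 - (z i).1) = _
  ring

lemma conj_vecMulVec (A B : Matrix (((Fin n → ZMod d) × (Fin n → ZMod d)) × (Fin n → ZMod d))
      (((Fin n → ZMod d) × (Fin n → ZMod d)) × (Fin n → ZMod d)) ℂ)
    (f g : ((Fin n → ZMod d) × (Fin n → ZMod d)) × (Fin n → ZMod d) → ℂ) :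
    A * Matrix.vecMulVec f g * Bᴴ
      = Matrix.vecMulVec (A.mulVec f) (star (B.mulVec (star g))) := by
  ext p q
  simp only [Matrix.mul_apply, Matrix.vecMulVec_apply, Matrix.conjTranspose_apply,
    Matrix.mulVec, dotProduct, Pi.star_apply, star_sum, star_mul', star_star]
  rw [Finset.sum_mul_sum]
  simp only [Finset.sum_mul]
  rw [Finset.sum_comm]
  exact Finset.sum_congr rfl fun r _ => Finset.sum_congr rfl fun s _ => by ring

lemma tensorTAB_decomp (u v : Fin n → ZMod d) (y z : Fin n → ZMod d × ZMod d) (ω : ℂ) :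
    tensorTAB d n (Matrix.single u v (1:ℂ))
        (Matrix.vecMulVec (bell d n ω y) (star (bell d n ω z)))
      = Matrix.vecMulVec
          (fun r => (if r.1.1 = u then (1:ℂ) else 0) * bell d n ω y (r.1.2, r.2))
          (fun s => (if s.1.1 = v then (1:ℂ) else 0) * star (bell d n ω z (s.1.2, s.2))) := by
  ext r s
  simp only [tensorTAB, Matrix.of_apply, Matrix.vecMulVec_apply, Matrix.single,
    Pi.star_apply, ite_and]
  by_cases h1 : u = r.1.1 <;> by_cases h2 : v = s.1.1 <;>
    simp [h1, h2, eq_comm]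

lemma keySum (h : ω ^ d = 1) (hs : star ω = ω⁻¹) (x y : Fin n → ZMod d × ZMod d)
    (u p2 : Fin n → ZMod d) :
    ∑ a, ∑ b, star (bell' d n ω x (u, a)) * (weylT d n ω x p2 b * bell d n ω y (a, b))
      = ((d : ℂ) ^ n)⁻¹ * (ω ^ (symp x y).val * weylT d n ω y p2 u) := by
  have hterm : ∀ a b : Fin n → ZMod d,
      star (bell' d n ω x (u, a)) * (weylT d n ω x p2 b * bell d n ω y (a, b))
        = ((Real.sqrt (d ^ n) : ℂ))⁻¹ * ((Real.sqrt (d ^ n) : ℂ))⁻¹ *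
            (weylT d n ω x p2 b * (weylT d n ω y b a * (weylT d n ω x)ᴴ a u)) := by
    intro a b
    simp only [bell, bell', star_mul', star_sqrtc]
    rw [show star (weylT d n ω x (u, a).1 (u, a).2) = (weylT d n ω x)ᴴ a u from rfl]
    ring
  simp only [hterm, ← Finset.mul_sum]
  rw [Finset.sum_comm]
  simp only [← Finset.mul_sum]
  simp only [← Matrix.mul_apply]
  rw [← Matrix.mul_assoc, weylT_comm h hs, Matrix.smul_apply, smul_eq_mul, cc]

lemma kraus_mulVec (h : ω ^ d = 1) (hs : star ω = ω⁻¹) (x y : Fin n → ZMod d × ZMod d)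
    (u : Fin n → ZMod d) :
    (kraus d n ω x).mulVec
        (fun r => (if r.1.1 = u then (1:ℂ) else 0) * bell d n ω y (r.1.2, r.2))
      = fun p => bell' d n ω x p.1 *
          (((d : ℂ) ^ n)⁻¹ * (ω ^ (symp x y).val * weylT d n ω y p.2 u)) := by
  funext p
  simp only [Matrix.mulVec, dotProduct]
  rw [Fintype.sum_prod_type]
  rw [Fintype.sum_prod_type]
  rw [Finset.sum_eq_single u]
  · dsimp only
    simp only [eq_self_iff_true, if_true, one_mul, kraus, Matrix.of_apply]
    calc (∑ a, ∑ b, bell' d n ω x p.1 * star (bell' d n ω x (u, a)) * weylT d n ω x p.2 b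
            * bell d n ω y (a, b))
        = bell' d n ω x p.1 * ∑ a, ∑ b,
            star (bell' d n ω x (u, a)) * (weylT d n ω x p.2 b * bell d n ω y (a, b)) := by
          rw [Finset.mul_sum]
          exact Finset.sum_congr rfl fun a _ => by
            rw [Finset.mul_sum]; exact Finset.sum_congr rfl fun b _ => by ring
      _ = _ := by rw [keySum h hs]
  · intro t _ ht
    dsimp only
    simp [ht]
  · intro hu
    exact absurd (Finset.mem_univ u) hu

lemma sandwich (A B : Matrix (Fin n → ZMod d) (Fin n → ZMod d) ℂ) (u v i j : Fin n → ZMod d) :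
    (A * Matrix.single u v (1:ℂ) * Bᴴ) i j = A i u * star (B j v) := by
  rw [Matrix.mul_apply, Finset.sum_eq_single v]
  · rw [Matrix.mul_single_apply_same, Matrix.conjTranspose_apply, mul_one]
  · intro k _ hk
    rw [Matrix.mul_single_apply_of_ne (c := (1:ℂ)) u v i k hk, zero_mul]
  · intro hv; exact absurd (Finset.mem_univ v) hv

lemma key (h : ω ^ d = 1) (hs : star ω = ω⁻¹) (u v : Fin n → ZMod d)
    (x y z : Fin n → ZMod d × ZMod d) :
    kraus d n ω x * tensorTAB d n (Matrix.single u v 1)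
        (Matrix.vecMulVec (bell d n ω y) (star (bell d n ω z))) * (kraus d n ω x)ᴴ
      = Matrix.of fun p q => bell' d n ω x p.1 * star (bell' d n ω x q.1) *
          (((d : ℂ) ^ (2 * n))⁻¹ * (ω ^ (symp x (y - z)).val *
            ((weylT d n ω y * Matrix.single u v 1 * (weylT d n ω z)ᴴ :
              Matrix (Fin n → ZMod d) (Fin n → ZMod d) ℂ)) p.2 q.2)) := by
  rw [tensorTAB_decomp, conj_vecMulVec]
  have hg : star (fun s : ((Fin n → ZMod d) × (Fin n → ZMod d)) × (Fin n → ZMod d) =>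
        (if s.1.1 = v then (1:ℂ) else 0) * star (bell d n ω z (s.1.2, s.2)))
      = fun s => (if s.1.1 = v then (1:ℂ) else 0) * bell d n ω z (s.1.2, s.2) := by
    funext s
    simp [star_mul', apply_ite (star : ℂ → ℂ)]
  rw [hg, kraus_mulVec h hs x y u, kraus_mulVec h hs x z v]
  ext p q
  rw [Matrix.vecMulVec_apply, Matrix.of_apply, sandwich]
  simp only [Pi.star_apply, star_mul', star_inv₀, star_pow, star_natCast, chi_star h hs, star_star]
  rw [show symp x (y - z) = symp x y + -(symp x z) from by rw [symp_sub, sub_eq_add_neg],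
    chi_add h, two_mul, pow_add, mul_inv]
  ring

end AuxD

/-- `T_x (|u⟩⟨v| ⊗ σ_n) T_x† = d^{−2n} |Ψ'_x⟩⟨Ψ'_x| ⊗
∑_{y,z} α_{y,z} ω^{⟨x,y−z⟩} N_y |u⟩⟨v| N_z†` for `σ_n = ∑_{y,z} α_{y,z}|Ψ_y⟩⟨Ψ_z|`. -/
theorem stmt9 (d n : ℕ) [NeZero d] (hd : 2 ≤ d) (ω : ℂ) (hω : IsPrimitiveRoot ω d)
    (σ : Matrix ((Fin n → ZMod d) × (Fin n → ZMod d)) ((Fin n → ZMod d) × (Fin n → ZMod d)) ℂ)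
    (α : (Fin n → ZMod d × ZMod d) → (Fin n → ZMod d × ZMod d) → ℂ)
    (hσ : σ = ∑ y : Fin n → ZMod d × ZMod d, ∑ z : Fin n → ZMod d × ZMod d,
      α y z • Matrix.vecMulVec (bell d n ω y) (star (bell d n ω z)))
    (u v : Fin n → ZMod d) (x : Fin n → ZMod d × ZMod d) :
    kraus d n ω x * tensorTAB d n (Matrix.single u v 1) σ * (kraus d n ω x)ᴴ
      = ((d : ℂ) ^ (2 * n))⁻¹ • Matrix.of
          (fun p q : ((Fin n → ZMod d) × (Fin n → ZMod d)) × (Fin n → ZMod d) =>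
          bell' d n ω x p.1 * star (bell' d n ω x q.1) *
            (∑ y : Fin n → ZMod d × ZMod d, ∑ z : Fin n → ZMod d × ZMod d,
              α y z * ω ^ (symp x (y - z)).val *
                ((weylT d n ω y * Matrix.single u v 1 * (weylT d n ω z)ᴴ :
                  Matrix (Fin n → ZMod d) (Fin n → ZMod d) ℂ) p.2 q.2))) := by
  have h : ω ^ d = 1 := hω.pow_eq_one
  have hs : star ω = ω⁻¹ := by
    rw [Complex.star_def, ← Complex.inv_eq_conj
      (Complex.norm_eq_one_of_pow_eq_one h (NeZero.ne d))]
  rw [hσ]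
  have lin : tensorTAB d n (Matrix.single u v 1)
      (∑ y : Fin n → ZMod d × ZMod d, ∑ z : Fin n → ZMod d × ZMod d,
        α y z • Matrix.vecMulVec (bell d n ω y) (star (bell d n ω z)))
      = ∑ y : Fin n → ZMod d × ZMod d, ∑ z : Fin n → ZMod d × ZMod d,
        α y z • tensorTAB d n (Matrix.single u v 1)
          (Matrix.vecMulVec (bell d n ω y) (star (bell d n ω z))) := by
    ext r s
    simp only [tensorTAB, Matrix.of_apply, Matrix.sum_apply, Matrix.smul_apply, smul_eq_mul,
      Finset.mul_sum]
    exact Finset.sum_congr rfl fun y _ => Finset.sum_congr rfl fun z _ => by ring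
  rw [lin]
  simp only [Matrix.mul_sum, Matrix.sum_mul, Matrix.mul_smul, Matrix.smul_mul]
  simp only [key h hs u v x]
  ext p q
  simp only [Matrix.sum_apply, Matrix.smul_apply, Matrix.of_apply, smul_eq_mul, Finset.mul_sum]
  exact Finset.sum_congr rfl fun y _ => Finset.sum_congr rfl fun z _ => by ring
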